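/- Let H be a Hilbert space and I the identity operator on H. For x ≠ 0, the set V_I(x) = {y ∈ H : ⟨x−y, y⟩ > 0} equals the open ball of center x/2 and radius ‖x‖/2, and the quasimonotone polar of I is I^ν = cone(I) ∪ ({0} × H), i.e., I^ν(x) = {t·x : t ≥ 0} for x ≠ 0 and I^ν(0) = H. -/

import Mathlib

open NormedSpace

variable {X : Type*} [NormedAddCommGroup X] [NormedSpace ℝ X]

/-- quasimonotone relation: (x,x*) ∼q (y,y*) iff min{⟨y−x,x*⟩, ⟨x−y,y*⟩} ≤ 0 -/
def qrel (p q : X × StrongDual ℝ X) : Prop :=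
  min (p.2 (q.1 - p.1)) (q.2 (p.1 - q.1)) ≤ 0

/-- quasimonotone polar -/
def qpolar (T : Set (X × StrongDual ℝ X)) : Set (X × StrongDual ℝ X) :=
  {p | ∀ q ∈ T, qrel p q}

/-- imagewise conic hull of an operator -/
def coneOp (T : Set (X × StrongDual ℝ X)) : Set (X × StrongDual ℝ X) :=
  {p | ∃ t : ℝ, 0 ≤ t ∧ ∃ v, (p.1, v) ∈ T ∧ p.2 = t • v}

def QuasiMono (T : Set (X × StrongDual ℝ X)) : Prop := ∀ p ∈ T, ∀ q ∈ T, qrel p q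

def MaxQuasiMono (T : Set (X × StrongDual ℝ X)) : Prop :=
  QuasiMono T ∧ ∀ S, QuasiMono S → T ⊆ S → S = T

def Vset (T : Set (X × StrongDual ℝ X)) (x : X) : Set X :=
  {y | ∃ y' : StrongDual ℝ X, (y, y') ∈ T ∧ 0 < y' (x - y)}

/-- the image T^ν(x) of the quasimonotone polar -/
def polarIm (T : Set (X × StrongDual ℝ X)) (x : X) : Set (StrongDual ℝ X) :=
  {x' | (x, x') ∈ qpolar T}

/-- normal cone of C at x (no convexity or membership assumed) -/
def normalCone (C : Set X) (x : X) : Set (StrongDual ℝ X) :=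
  {x' | ∀ y ∈ C, x' (y - x) ≤ 0}

def im (T : Set (X × StrongDual ℝ X)) (x : X) : Set (StrongDual ℝ X) := {v | (x, v) ∈ T}

/-- effective domain: T(u) nonempty and ≠ {0} -/
def edom (T : Set (X × StrongDual ℝ X)) : Set X :=
  {u | (im T u).Nonempty ∧ im T u ≠ {0}}

/-- conic hull of a set in the dual -/
def coneSet (A : Set (StrongDual ℝ X)) : Set (StrongDual ℝ X) :=
  {v | ∃ t : ℝ, 0 ≤ t ∧ ∃ a ∈ A, v = t • a}

def Eset (T : Set (X × StrongDual ℝ X)) : Set X := {x | Vset T x = ∅}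

/-- solution set of the Minty variational inequality for S on K -/
def Minty (S : Set (X × StrongDual ℝ X)) (K : Set X) : Set X :=
  {x ∈ K | ∀ q ∈ S, q.1 ∈ K → q.2 (x - q.1) ≤ 0}

def AEMaxQuasiMono (T : Set (X × StrongDual ℝ X)) : Prop :=
  QuasiMono T ∧ ∀ S, QuasiMono S → (∀ x ∈ edom T, im T x ⊆ coneSet (im S x)) →
    (∀ x ∈ edom T, coneSet (im T x) = coneSet (im S x)) ∧ edom T = edom S

theorem stmt11 {H : Type*} [NormedAddCommGroup H] [InnerProductSpace ℝ H] [CompleteSpace H] :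
    (∀ x : H, x ≠ 0 →
      Vset {p : H × StrongDual ℝ H | p.2 = InnerProductSpace.toDual ℝ H p.1} x =
        Metric.ball ((1 / 2 : ℝ) • x) (‖x‖ / 2)) ∧
    (∀ x : H, x ≠ 0 →
      polarIm {p : H × StrongDual ℝ H | p.2 = InnerProductSpace.toDual ℝ H p.1} x =
        {v | ∃ t : ℝ, 0 ≤ t ∧ v = t • InnerProductSpace.toDual ℝ H x}) ∧
    polarIm {p : H × StrongDual ℝ H | p.2 = InnerProductSpace.toDual ℝ H p.1} 0 = Set.univ := by
  refine ⟨?_, ?_, ?_⟩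
  · intro x hx
    have hxn : (0:ℝ) < ‖x‖ := norm_pos_iff.mpr hx
    ext y
    simp only [Vset, Set.mem_setOf_eq, Metric.mem_ball, dist_eq_norm,
      InnerProductSpace.toDual_apply_apply]
    have e1 : ‖y - (1/2:ℝ) • x‖^2 = ‖y‖^2 - inner ℝ y x + ‖x‖^2/4 := by
      rw [norm_sub_sq_real, real_inner_smul_right, norm_smul, Real.norm_eq_abs,
        abs_of_pos (by norm_num : (0:ℝ) < 1/2)]
      ring
    constructor
    · rintro ⟨y', hy', hpos⟩
      replace hy' : y' = InnerProductSpace.toDual ℝ H y := hy'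
      subst hy'
      rw [InnerProductSpace.toDual_apply_apply, inner_sub_right, real_inner_self_eq_norm_sq] at hpos
      nlinarith [norm_nonneg (y - (1/2:ℝ) • x), norm_nonneg x]
    · intro hball
      refine ⟨InnerProductSpace.toDual ℝ H y, rfl, ?_⟩
      rw [InnerProductSpace.toDual_apply_apply, inner_sub_right, real_inner_self_eq_norm_sq]
      nlinarith [norm_nonneg (y - (1/2:ℝ) • x)]
  · intro x hx
    have hxn : (0:ℝ) < ‖x‖^2 := pow_pos (norm_pos_iff.mpr hx) 2
    ext f
    simp only [polarIm, qpolar, qrel, Set.mem_setOf_eq]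
    constructor
    · intro h
      set v := (InnerProductSpace.toDual ℝ H).symm f with hv
      have hf : ∀ z, f z = inner ℝ v z := fun z => by
        rw [hv, ← InnerProductSpace.toDual_apply_apply,
          LinearIsometryEquiv.apply_symm_apply]
      have h' : ∀ y : H, min (inner ℝ v (y - x) : ℝ) (inner ℝ y (x - y) : ℝ) ≤ 0 := by
        intro y
        have := h (y, InnerProductSpace.toDual ℝ H y) rfl
        simpa [hf, InnerProductSpace.toDual_apply_apply] using this
      -- strict version
      have hstrict : ∀ w : H, (inner ℝ x w : ℝ) < 0 → (inner ℝ v w : ℝ) ≤ 0 := by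
        intro w hw
        have hwne : w ≠ 0 := by
          intro hw0; rw [hw0, inner_zero_right] at hw; exact lt_irrefl _ hw
        have hwn : (0:ℝ) < ‖w‖^2 := pow_pos (norm_pos_iff.mpr hwne) 2
        set s : ℝ := -(inner ℝ x w : ℝ) / (2 * ‖w‖^2) with hs
        have hs0 : 0 < s := by
          exact div_pos (by linarith) (by linarith)
        have key := h' (x + s • w)
        have e2 : (inner ℝ (x + s • w) (x - (x + s • w)) : ℝ) =
            -s * (inner ℝ x w : ℝ) - s^2 * ‖w‖^2 := by
          have : x - (x + s • w) = -(s • w) := by abel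
          rw [this]
          simp only [inner_neg_right, inner_add_left, real_inner_smul_left,
            real_inner_smul_right, real_inner_self_eq_norm_sq, norm_smul,
            Real.norm_eq_abs, mul_pow, sq_abs]
          ring
        have e3 : (0:ℝ) < -s * (inner ℝ x w : ℝ) - s^2 * ‖w‖^2 := by
          rw [hs]
          have : -(-(inner ℝ x w : ℝ) / (2 * ‖w‖^2)) * (inner ℝ x w : ℝ) -
              (-(inner ℝ x w : ℝ) / (2 * ‖w‖^2))^2 * ‖w‖^2 =
              (inner ℝ x w : ℝ)^2 / (4 * ‖w‖^2) := by
            field_simp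
            ring
          rw [this]
          exact div_pos (by nlinarith) (by linarith)
        rw [e2] at key
        have h4 : (inner ℝ v (x + s • w - x) : ℝ) ≤ 0 := by
          rcases min_le_iff.mp key with h5 | h5
          · exact h5
          · linarith
        have : x + s • w - x = s • w := by abel
        rw [this, real_inner_smul_right] at h4
        nlinarith
      have hkey : ∀ w : H, (inner ℝ x w : ℝ) ≤ 0 → (inner ℝ v w : ℝ) ≤ 0 := by
        intro w hw
        have hδ : ∀ δ : ℝ, 0 < δ → (inner ℝ v w : ℝ) ≤ δ * (inner ℝ v x : ℝ) := by
          intro δ hδ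
          have : (inner ℝ x (w - δ • x) : ℝ) < 0 := by
            rw [inner_sub_right, real_inner_smul_right, real_inner_self_eq_norm_sq]
            nlinarith
          have := hstrict _ this
          rw [inner_sub_right, real_inner_smul_right] at this
          linarith
        by_contra hc
        push_neg at hc
        rcases le_or_gt (inner ℝ v x : ℝ) 0 with h6 | h6
        · have := hδ 1 one_pos; nlinarith
        · have := hδ ((inner ℝ v w : ℝ) / (2 * (inner ℝ v x : ℝ))) (div_pos hc (by linarith))
          have h7 : (inner ℝ v w : ℝ) / (2 * (inner ℝ v x : ℝ)) * (inner ℝ v x : ℝ) =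
              (inner ℝ v w : ℝ) / 2 := by field_simp
          rw [h7] at this
          linarith
      set a : ℝ := (inner ℝ v x : ℝ) / ‖x‖^2 with ha
      have hu : (inner ℝ x (v - a • x) : ℝ) = 0 := by
        rw [inner_sub_right, real_inner_smul_right, real_inner_self_eq_norm_sq, ha,
          real_inner_comm]
        field_simp
        ring
      have h8 := hkey _ (le_of_eq hu)
      have h9 : (inner ℝ v (v - a • x) : ℝ) = ‖v - a • x‖^2 := by
        have : (inner ℝ v (v - a • x) : ℝ) = (inner ℝ (v - a • x) (v - a • x) : ℝ) +
            a * (inner ℝ x (v - a • x) : ℝ) := by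
          rw [← real_inner_smul_left, ← inner_add_left]
          congr 1
          abel
        rw [this, hu, real_inner_self_eq_norm_sq]
        ring
      have h10 : v - a • x = 0 := by
        have hn : ‖v - a • x‖^2 ≤ 0 := h9 ▸ h8
        have : ‖v - a • x‖ = 0 := by nlinarith [norm_nonneg (v - a • x)]
        exact norm_eq_zero.mp this
      have hva : v = a • x := by
        have := sub_eq_zero.mp h10; exact this
      have h11 := hkey (-x) (by rw [inner_neg_right, real_inner_self_eq_norm_sq]; nlinarith)
      rw [hva, inner_neg_right, real_inner_smul_left, real_inner_self_eq_norm_sq] at h11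
      have haa : 0 ≤ a := by nlinarith
      refine ⟨a, haa, ?_⟩
      have : f = InnerProductSpace.toDual ℝ H v := by
        rw [hv, LinearIsometryEquiv.apply_symm_apply]
      rw [this, hva, map_smul]
    · rintro ⟨t, ht, rfl⟩
      rintro ⟨y, y'⟩ hy
      simp only [Set.mem_setOf_eq] at hy
      subst hy
      simp only [ContinuousLinearMap.smul_apply, InnerProductSpace.toDual_apply_apply, smul_eq_mul]
      by_contra hc
      push_neg at hc
      rw [lt_min_iff] at hc
      obtain ⟨h1, h2⟩ := hc
      rw [inner_sub_right, real_inner_self_eq_norm_sq] at h1 h2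
      have hxy : (inner ℝ x y : ℝ) = (inner ℝ y x : ℝ) := real_inner_comm y x
      have ht' : 0 < t := by
        rcases ht.lt_or_eq with h | h
        · exact h
        · rw [← h] at h1; simp at h1
      have hA : ‖x‖^2 < (inner ℝ x y : ℝ) := by nlinarith
      have hB : ‖y‖^2 < (inner ℝ x y : ℝ) := by rw [hxy]; linarith
      have hCS := real_inner_mul_inner_self_le x y
      rw [real_inner_self_eq_norm_sq, real_inner_self_eq_norm_sq] at hCS
      have hx2 : (0:ℝ) < ‖x‖^2 := pow_pos (norm_pos_iff.mpr hx) 2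
      nlinarith
  · ext f
    simp only [polarIm, qpolar, qrel, Set.mem_setOf_eq, Set.mem_univ, iff_true]
    rintro ⟨y, y'⟩ hy
    simp only [Set.mem_setOf_eq] at hy
    subst hy
    refine min_le_of_right_le ?_
    simp only [InnerProductSpace.toDual_apply_apply]
    rw [inner_sub_right, real_inner_self_eq_norm_sq, inner_zero_right]
    nlinarith [norm_nonneg y]
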